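/- Let α ∈ ℝ with κ := cos(3α) ≠ 0, n₁ = cos α, n₂ = sin α, let c₁, c₂, E ∈ ℝ, and set β = −κE + c₁n₁ + c₂n₂. Suppose Q : ℝ × ℝ → ℝ is C¹ in time and C³ in space, and define q(t, x, y) = Q(t, n₁x + n₂y), u₁ = (n₁² − n₂²)q + c₁, u₂ = −2n₁n₂·q + c₂. Then q solves the Novikov–Veselov equation at energy E, namely 4q_t = −q_{xxx} + 3q_{xyy} + 3∂_x((q − E)u₁) + 3∂_y((q − E)u₂), if and only if Q(t, s) solves (4/κ)·Q_t = −Q_{sss} + 6Q·Q_s + (3β/κ)·Q_s. -/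

import Mathlib

/-- Partial derivative in `t` for a real function `f(t, x, y)`. -/
noncomputable def dT (f : ℝ → ℝ → ℝ → ℝ) : ℝ → ℝ → ℝ → ℝ :=
  fun t x y => deriv (fun t' => f t' x y) t

/-- Partial derivative in `x` for a real function `f(t, x, y)`. -/
noncomputable def dX (f : ℝ → ℝ → ℝ → ℝ) : ℝ → ℝ → ℝ → ℝ :=
  fun t x y => deriv (fun x' => f t x' y) x

/-- Partial derivative in `y` for a real function `f(t, x, y)`. -/
noncomputable def dY (f : ℝ → ℝ → ℝ → ℝ) : ℝ → ℝ → ℝ → ℝ :=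
  fun t x y => deriv (fun y' => f t x y') y

private lemma hdaX (F : ℝ → ℝ) {s d : ℝ} (a b x : ℝ) (hs : a * x + b = s)
    (hF : HasDerivAt F d s) : HasDerivAt (fun x' => F (a * x' + b)) (a * d) x := by
  subst hs
  simpa [Function.comp_def, mul_comm] using
    hF.comp x (((hasDerivAt_id x).const_mul a).add_const b)

private lemma hdaY (F : ℝ → ℝ) {s d : ℝ} (a b y : ℝ) (hs : b + a * y = s)
    (hF : HasDerivAt F d s) : HasDerivAt (fun y' => F (b + a * y')) (a * d) y := by
  subst hs
  simpa [Function.comp_def, mul_comm] using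
    hF.comp y (((hasDerivAt_id y).const_mul a).const_add b)

/-- A plane wave `q(t,x,y) = Q(t, n₁x + n₂y)` with bounded auxiliary fields
`u₁ = (n₁²−n₂²)q + c₁`, `u₂ = −2n₁n₂q + c₂` solves the Novikov–Veselov equation at
energy `E` iff `Q` solves the KdV-type equation
`(4/κ)Q_t = −Q_{sss} + 6QQ_s + (3β/κ)Q_s`, where `κ = cos 3α` and
`β = −κE + c₁n₁ + c₂n₂`. -/
theorem statement7 (α c₁ c₂ E n₁ n₂ κ β : ℝ)
    (hn₁ : n₁ = Real.cos α) (hn₂ : n₂ = Real.sin α)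
    (hκ : κ = Real.cos (3 * α)) (hκ0 : κ ≠ 0)
    (hβ : β = -κ * E + c₁ * n₁ + c₂ * n₂)
    (Q : ℝ → ℝ → ℝ)
    (hQt : ∀ s, ContDiff ℝ 1 (fun t => Q t s))
    (hQs : ∀ t, ContDiff ℝ 3 (fun s => Q t s))
    (q u₁ u₂ : ℝ → ℝ → ℝ → ℝ)
    (hq : q = fun t x y => Q t (n₁ * x + n₂ * y))
    (hu₁ : u₁ = fun t x y => (n₁ ^ 2 - n₂ ^ 2) * q t x y + c₁)
    (hu₂ : u₂ = fun t x y => -(2 * n₁ * n₂) * q t x y + c₂) :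
    (∀ t x y, 4 * dT q t x y
        = - dX (dX (dX q)) t x y + 3 * dX (dY (dY q)) t x y
          + 3 * dX (fun t x y => (q t x y - E) * u₁ t x y) t x y
          + 3 * dY (fun t x y => (q t x y - E) * u₂ t x y) t x y)
      ↔ (∀ t s, (4 / κ) * deriv (fun t' => Q t' s) t
          = - iteratedDeriv 3 (fun s' => Q t s') s
            + 6 * Q t s * deriv (fun s' => Q t s') s
            + (3 * β / κ) * deriv (fun s' => Q t s') s) := by
  subst hu₁ hu₂ hq hβ
  -- basic trigonometric identities
  have hpyth : n₁ ^ 2 + n₂ ^ 2 = 1 := by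
    rw [hn₁, hn₂]; exact Real.cos_sq_add_sin_sq α
  have hκ' : κ = n₁ ^ 3 - 3 * n₁ * n₂ ^ 2 := by
    rw [hκ, Real.cos_three_mul, hn₁, hn₂]
    linear_combination 3 * Real.cos α * Real.sin_sq_add_cos_sq α
  -- the key pointwise equivalence
  have key : ∀ t x y,
      (4 * dT (fun t x y => Q t (n₁ * x + n₂ * y)) t x y
        = - dX (dX (dX (fun t x y => Q t (n₁ * x + n₂ * y)))) t x y
          + 3 * dX (dY (dY (fun t x y => Q t (n₁ * x + n₂ * y)))) t x y
          + 3 * dX (fun t x y => (Q t (n₁ * x + n₂ * y) - E) *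
              ((n₁ ^ 2 - n₂ ^ 2) * Q t (n₁ * x + n₂ * y) + c₁)) t x y
          + 3 * dY (fun t x y => (Q t (n₁ * x + n₂ * y) - E) *
              (-(2 * n₁ * n₂) * Q t (n₁ * x + n₂ * y) + c₂)) t x y)
      ↔ ((4 / κ) * deriv (fun t' => Q t' (n₁ * x + n₂ * y)) t
          = - iteratedDeriv 3 (fun s' => Q t s') (n₁ * x + n₂ * y)
            + 6 * Q t (n₁ * x + n₂ * y) * deriv (fun s' => Q t s') (n₁ * x + n₂ * y)
            + (3 * (-κ * E + c₁ * n₁ + c₂ * n₂) / κ) *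
                deriv (fun s' => Q t s') (n₁ * x + n₂ * y)) := by
    intro t x y
    -- differentiability of the profile and its derivatives
    have h3c : ContDiff ℝ (2+1) (Q t) := by norm_num; exact hQs t
    have hc2 : ContDiff ℝ 2 (deriv (Q t)) := (contDiff_succ_iff_deriv.mp h3c).2.2
    have h2c : ContDiff ℝ (1+1) (deriv (Q t)) := by norm_num; exact hc2
    have hc1 : ContDiff ℝ 1 (deriv (deriv (Q t))) := (contDiff_succ_iff_deriv.mp h2c).2.2
    have hd0 : Differentiable ℝ (Q t) := (hQs t).differentiable (by norm_num)
    have hd1 : Differentiable ℝ (deriv (Q t)) := hc2.differentiable (by norm_num)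
    have hd2 : Differentiable ℝ (deriv (deriv (Q t))) := hc1.differentiable (by norm_num)
    set D1 := deriv (Q t) with hD1
    set D2 := deriv (deriv (Q t)) with hD2
    set D3 := deriv (deriv (deriv (Q t))) with hD3
    have hiter : iteratedDeriv 3 (fun s' => Q t s') (n₁ * x + n₂ * y) = D3 (n₁ * x + n₂ * y) := by
      show iteratedDeriv (2+1) (Q t) _ = _
      rw [iteratedDeriv_succ, iteratedDeriv_succ, iteratedDeriv_one]
    -- first x-derivative
    have h1 : ∀ x y, dX (fun t x y => Q t (n₁ * x + n₂ * y)) t x y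
        = n₁ * D1 (n₁ * x + n₂ * y) := fun x y =>
      (hdaX (Q t) n₁ (n₂ * y) x rfl (hd0 _).hasDerivAt).deriv
    -- second x-derivative
    have h2 : ∀ x y, dX (dX (fun t x y => Q t (n₁ * x + n₂ * y))) t x y
        = n₁ * (n₁ * D2 (n₁ * x + n₂ * y)) := by
      intro x y
      show deriv (fun x' => dX (fun t x y => Q t (n₁ * x + n₂ * y)) t x' y) x = _
      have hfun : (fun x' => dX (fun t x y => Q t (n₁ * x + n₂ * y)) t x' y)
          = fun x' => n₁ * D1 (n₁ * x' + n₂ * y) := funext fun x' => h1 x' y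
      rw [hfun]
      exact ((hdaX D1 n₁ (n₂ * y) x rfl (hd1 _).hasDerivAt).const_mul n₁).deriv
    -- third x-derivative
    have h3 : dX (dX (dX (fun t x y => Q t (n₁ * x + n₂ * y)))) t x y
        = n₁ * (n₁ * (n₁ * D3 (n₁ * x + n₂ * y))) := by
      show deriv (fun x' => dX (dX (fun t x y => Q t (n₁ * x + n₂ * y))) t x' y) x = _
      have hfun : (fun x' => dX (dX (fun t x y => Q t (n₁ * x + n₂ * y))) t x' y)
          = fun x' => n₁ * (n₁ * D2 (n₁ * x' + n₂ * y)) := funext fun x' => h2 x' y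
      rw [hfun]
      exact (((hdaX D2 n₁ (n₂ * y) x rfl (hd2 _).hasDerivAt).const_mul n₁).const_mul n₁).deriv
    -- first y-derivative
    have h4 : ∀ x y, dY (fun t x y => Q t (n₁ * x + n₂ * y)) t x y
        = n₂ * D1 (n₁ * x + n₂ * y) := fun x y =>
      (hdaY (Q t) n₂ (n₁ * x) y rfl (hd0 _).hasDerivAt).deriv
    -- second y-derivative
    have h5 : ∀ x y, dY (dY (fun t x y => Q t (n₁ * x + n₂ * y))) t x y
        = n₂ * (n₂ * D2 (n₁ * x + n₂ * y)) := by
      intro x y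
      show deriv (fun y' => dY (fun t x y => Q t (n₁ * x + n₂ * y)) t x y') y = _
      have hfun : (fun y' => dY (fun t x y => Q t (n₁ * x + n₂ * y)) t x y')
          = fun y' => n₂ * D1 (n₁ * x + n₂ * y') := funext fun y' => h4 x y'
      rw [hfun]
      exact ((hdaY D1 n₂ (n₁ * x) y rfl (hd1 _).hasDerivAt).const_mul n₂).deriv
    -- mixed third derivative
    have h6 : dX (dY (dY (fun t x y => Q t (n₁ * x + n₂ * y)))) t x y
        = n₁ * (n₂ * (n₂ * D3 (n₁ * x + n₂ * y))) := by
      show deriv (fun x' => dY (dY (fun t x y => Q t (n₁ * x + n₂ * y))) t x' y) x = _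
      have hfun : (fun x' => dY (dY (fun t x y => Q t (n₁ * x + n₂ * y))) t x' y)
          = fun x' => n₂ * (n₂ * D2 (n₁ * x' + n₂ * y)) := funext fun x' => h5 x' y
      rw [hfun,
        (((hdaX D2 n₁ (n₂ * y) x rfl (hd2 _).hasDerivAt).const_mul n₂).const_mul n₂).deriv]
      ring
    -- nonlinear x-term
    have h7 : dX (fun t x y => (Q t (n₁ * x + n₂ * y) - E) *
          ((n₁ ^ 2 - n₂ ^ 2) * Q t (n₁ * x + n₂ * y) + c₁)) t x y
        = n₁ * (D1 (n₁ * x + n₂ * y) * ((n₁ ^ 2 - n₂ ^ 2) * Q t (n₁ * x + n₂ * y) + c₁)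
            + (Q t (n₁ * x + n₂ * y) - E) * ((n₁ ^ 2 - n₂ ^ 2) * D1 (n₁ * x + n₂ * y))) := by
      have hG : HasDerivAt (fun z => (Q t z - E) * ((n₁ ^ 2 - n₂ ^ 2) * Q t z + c₁))
          (D1 (n₁ * x + n₂ * y) * ((n₁ ^ 2 - n₂ ^ 2) * Q t (n₁ * x + n₂ * y) + c₁)
            + (Q t (n₁ * x + n₂ * y) - E) * ((n₁ ^ 2 - n₂ ^ 2) * D1 (n₁ * x + n₂ * y)))
          (n₁ * x + n₂ * y) :=
        ((hd0 _).hasDerivAt.sub_const E).mul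
          (((hd0 _).hasDerivAt.const_mul (n₁ ^ 2 - n₂ ^ 2)).add_const c₁)
      exact (hdaX _ n₁ (n₂ * y) x rfl hG).deriv
    -- nonlinear y-term
    have h8 : dY (fun t x y => (Q t (n₁ * x + n₂ * y) - E) *
          (-(2 * n₁ * n₂) * Q t (n₁ * x + n₂ * y) + c₂)) t x y
        = n₂ * (D1 (n₁ * x + n₂ * y) * (-(2 * n₁ * n₂) * Q t (n₁ * x + n₂ * y) + c₂)
            + (Q t (n₁ * x + n₂ * y) - E) * (-(2 * n₁ * n₂) * D1 (n₁ * x + n₂ * y))) := by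
      have hG : HasDerivAt (fun z => (Q t z - E) * (-(2 * n₁ * n₂) * Q t z + c₂))
          (D1 (n₁ * x + n₂ * y) * (-(2 * n₁ * n₂) * Q t (n₁ * x + n₂ * y) + c₂)
            + (Q t (n₁ * x + n₂ * y) - E) * (-(2 * n₁ * n₂) * D1 (n₁ * x + n₂ * y)))
          (n₁ * x + n₂ * y) :=
        ((hd0 _).hasDerivAt.sub_const E).mul
          (((hd0 _).hasDerivAt.const_mul (-(2 * n₁ * n₂))).add_const c₂)
      exact (hdaY _ n₂ (n₁ * x) y rfl hG).deriv
    rw [h3, h6, h7, h8, hiter]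
    show 4 * deriv (fun t' => Q t' (n₁ * x + n₂ * y)) t = _ ↔ _
    constructor
    · intro h
      rw [hκ']
      have hκ0' : n₁ ^ 3 - 3 * n₁ * n₂ ^ 2 ≠ 0 := by rw [hκ'] at hκ0; exact hκ0
      have hA : n₁ ≠ 0 := fun h0 => hκ0' (by rw [h0]; ring)
      have hB : n₁ ^ 2 - 3 * n₂ ^ 2 ≠ 0 := fun h0 => hκ0' (by linear_combination n₁ * h0)
      field_simp
      linear_combination h
    · intro h
      rw [hκ'] at h
      have hκ0' : n₁ ^ 3 - 3 * n₁ * n₂ ^ 2 ≠ 0 := by rw [hκ'] at hκ0; exact hκ0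
      have hA : n₁ ≠ 0 := fun h0 => hκ0' (by rw [h0]; ring)
      have hB : n₁ ^ 2 - 3 * n₂ ^ 2 ≠ 0 := fun h0 => hκ0' (by linear_combination n₁ * h0)
      field_simp at h
      linear_combination h
  constructor
  · intro h t s
    have hs : n₁ * (n₁ * s) + n₂ * (n₂ * s) = s := by
      have : n₁ * (n₁ * s) + n₂ * (n₂ * s) = (n₁ ^ 2 + n₂ ^ 2) * s := by ring
      rw [this, hpyth, one_mul]
    have := (key t (n₁ * s) (n₂ * s)).mp (h t (n₁ * s) (n₂ * s))
    rwa [hs] at this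
  · intro h t x y
    exact (key t x y).mpr (h t (n₁ * x + n₂ * y))
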